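/- Let α be a zero-free sequence of length ℓ > n/2 in Z/nZ. Suppose that for some k ∈ {1,...,ℓ−2} the first k+1 terms of α form a subsequence whose sumset has size at least 2k+1. Then the remaining ℓ−k−1 terms of α can be rearranged so that the resulting full sequence ends in a 1-term. -/

import Mathlib

/-- A list in an additive commutative group is zero-free if no nonempty
sublist sums to zero. -/
def ZeroFree {G : Type*} [AddCommGroup G] (l : List G) : Prop :=
  ∀ t : List G, t.Sublist l → t ≠ [] → t.sum ≠ 0

/-- The sumset of a list: all sums of nonempty sublists. -/
def sumset {G : Type*} [AddCommGroup G] (l : List G) : Set G :=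
  {x | ∃ t : List G, t.Sublist l ∧ t ≠ [] ∧ t.sum = x}

section Aux

variable {G : Type*} [AddCommGroup G]

/-- All submultiset sums (including 0 for the empty submultiset). -/
def S0 (M : Multiset G) : Set G := {x | ∃ s : Multiset G, s ≤ M ∧ s.sum = x}

/-- Multiset version of zero-freeness. -/
def MZF (M : Multiset G) : Prop := ∀ s : Multiset G, s ≤ M → s ≠ 0 → s.sum ≠ 0

lemma zero_mem_S0 (M : Multiset G) : (0 : G) ∈ S0 M := ⟨0, zero_le, rfl⟩

lemma sum_mem_S0 (M : Multiset G) : M.sum ∈ S0 M := ⟨M, le_refl M, rfl⟩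

lemma S0_mono {M N : Multiset G} (h : M ≤ N) : S0 M ⊆ S0 N := by
  rintro x ⟨s, hs, rfl⟩; exact ⟨s, le_trans hs h, rfl⟩

lemma MZF_mono {M N : Multiset G} (h : M ≤ N) (hz : MZF N) : MZF M :=
  fun s hs => hz s (le_trans hs h)

lemma le_coe_iff {s : Multiset G} {l : List G} :
    s ≤ ↑l ↔ ∃ t : List G, t.Sublist l ∧ ↑t = s := by
  constructor
  · intro h
    rw [← Multiset.coe_toList s, Multiset.coe_le] at h
    obtain ⟨t, ht1, ht2⟩ := h
    exact ⟨t, ht2, (Multiset.coe_eq_coe.mpr ht1).trans (Multiset.coe_toList s)⟩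
  · rintro ⟨t, ht, rfl⟩
    exact Multiset.coe_le.mpr ht.subperm

/-- Freshness: the total sum of a zero-free multiset `M + {b}` is not a
submultiset sum of `M`. -/
lemma fresh {M : Multiset G} {b : G} (hz : MZF (M + {b})) :
    M.sum + b ∉ S0 M := by
  rintro ⟨s, hs, hsum⟩
  obtain ⟨c, hM⟩ := Multiset.le_iff_exists_add.mp hs
  apply hz (c + {b})
  · rw [hM, add_assoc]; exact le_add_self
  · intro h0
    have hb : b ∈ c + {b} := by simp
    rw [h0] at hb; simp at hb
  · have h4 : s.sum + (c.sum + b) = s.sum + 0 := by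
      rw [add_zero, ← add_assoc, ← Multiset.sum_add, ← hM, hsum]
    have h5 := add_left_cancel h4
    rw [Multiset.sum_add, Multiset.sum_singleton]; exact h5

variable [Fintype G] [DecidableEq G]

lemma S0_insert_subset {M : Multiset G} {b : G} :
    insert (M.sum + b) (S0 M) ⊆ S0 (M + {b}) := by
  intro x hx
  rcases hx with rfl | hx
  · have h := sum_mem_S0 (M + {b})
    rwa [Multiset.sum_add, Multiset.sum_singleton] at h
  · exact S0_mono (self_le_add_right M {b}) hx

lemma ncard_S0_lt {M : Multiset G} {b : G} (hz : MZF (M + {b})) :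
    (S0 M).ncard + 1 ≤ (S0 (M + {b})).ncard := by
  have h2 := Set.ncard_insert_of_notMem (fresh hz) (Set.toFinite _)
  calc (S0 M).ncard + 1 = (insert (M.sum + b) (S0 M)).ncard := h2.symm
    _ ≤ _ := Set.ncard_le_ncard S0_insert_subset (Set.toFinite _)

lemma ncard_S0_le (M : Multiset G) : (S0 M).ncard ≤ Fintype.card G := by
  simpa [Set.ncard_univ] using Set.ncard_le_ncard (Set.subset_univ (S0 M)) (Set.toFinite _)

/-- `b` extends `M` minimally: the sumset shifted stays inside except at the top. -/
def Good (M : Multiset G) (b : G) : Prop :=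
  ∀ x ∈ S0 M, x ≠ M.sum → x + b ∈ S0 M

lemma S0_add_singleton_subset {M : Multiset G} {b : G} :
    S0 (M + {b}) ⊆ S0 M ∪ (· + b) '' S0 M := by
  rintro x ⟨s, hs, rfl⟩
  by_cases hb : b ∈ s
  · right
    refine ⟨(s.erase b).sum, ⟨s.erase b, ?_, rfl⟩, ?_⟩
    · rw [Multiset.le_iff_count] at hs ⊢
      intro a
      have h := hs a
      rcases eq_or_ne a b with rfl | hab
      · rw [Multiset.count_erase_self]
        simp [Multiset.count_add, Multiset.count_singleton] at h
        omega
      · rw [Multiset.count_erase_of_ne hab]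
        simpa [Multiset.count_add, Multiset.count_singleton, hab] using h
    · conv_rhs => rw [← Multiset.cons_erase hb]
      rw [Multiset.sum_cons]; exact (add_comm _ _)
  · left
    refine ⟨s, ?_, rfl⟩
    rw [Multiset.le_iff_count] at hs ⊢
    intro a
    have h := hs a
    rcases eq_or_ne a b with rfl | hab
    · simp [Multiset.count_eq_zero_of_notMem hb]
    · simpa [Multiset.count_add, Multiset.count_singleton, hab] using h

lemma S0_eq_of_good {M : Multiset G} {b : G} (hz : MZF (M + {b})) (hg : Good M b) :
    S0 (M + {b}) = insert (M.sum + b) (S0 M) := by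
  apply Set.Subset.antisymm _ S0_insert_subset
  intro x hx
  rcases S0_add_singleton_subset hx with h | ⟨y, hy, rfl⟩
  · exact Set.mem_insert_of_mem _ h
  · by_cases hyσ : y = M.sum
    · subst hyσ; exact Set.mem_insert _ _
    · exact Set.mem_insert_of_mem _ (hg y hy hyσ)

lemma ncard_of_good {M : Multiset G} {b : G} (hz : MZF (M + {b})) (hg : Good M b) :
    (S0 (M + {b})).ncard = (S0 M).ncard + 1 := by
  rw [S0_eq_of_good hz hg, Set.ncard_insert_of_notMem (fresh hz) (Set.toFinite _)]

lemma good_of_inc1 {M : Multiset G} {b : G} (hz : MZF (M + {b}))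
    (h1 : (S0 (M + {b})).ncard = (S0 M).ncard + 1) : Good M b := by
  have heq : insert (M.sum + b) (S0 M) = S0 (M + {b}) := by
    apply Set.eq_of_subset_of_ncard_le S0_insert_subset
    rw [h1, Set.ncard_insert_of_notMem (fresh hz) (Set.toFinite _)]
  intro x hx hxσ
  have hxb : x + b ∈ S0 (M + {b}) := by
    obtain ⟨s, hs, rfl⟩ := hx
    exact ⟨s + {b}, add_le_add_left hs _, by rw [Multiset.sum_add, Multiset.sum_singleton]⟩
  rw [← heq, Set.mem_insert_iff] at hxb
  rcases hxb with h | h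
  · exact absurd (add_right_cancel h) hxσ
  · exact h

lemma good_propagate {M : Multiset G} {b : G} (hz : MZF (M + {b})) (hg : Good M b) :
    Good (M + {b}) b := by
  intro x hx hxσ
  rw [S0_eq_of_good hz hg] at hx ⊢
  rw [Multiset.sum_add, Multiset.sum_singleton] at hxσ
  rcases Set.mem_insert_iff.mp hx with rfl | hx
  · exact absurd rfl hxσ
  · by_cases hxs : x = M.sum
    · subst hxs; exact Set.mem_insert _ _
    · exact Set.mem_insert_of_mem _ (hg x hx hxs)

lemma back {M : Multiset G} {b : G} (hz : MZF (M + {b})) (hg : Good M b) :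
    ∀ x ∈ S0 M, x ≠ 0 → x - b ∈ S0 M := by
  have hfin : (S0 M).Finite := Set.toFinite _
  have himg : (· + b) '' (S0 M \ {M.sum}) ⊆ S0 M \ {0} := by
    rintro _ ⟨y, ⟨hyA, hyσ⟩, rfl⟩
    refine ⟨hg y hyA (by simpa using hyσ), ?_⟩
    intro h0
    obtain ⟨s, hs, hsum⟩ := hyA
    refine hz (s + {b}) (add_le_add_left hs _) (by simp) ?_
    rw [Multiset.sum_add, Multiset.sum_singleton, hsum]
    simpa using h0
  have hcard : (S0 M \ {0}).ncard ≤ ((· + b) '' (S0 M \ {M.sum})).ncard := by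
    rw [Set.ncard_image_of_injective _ (add_left_injective b),
      Set.ncard_diff_singleton_of_mem (sum_mem_S0 M),
      Set.ncard_diff_singleton_of_mem (zero_mem_S0 M)]
  have heq := Set.eq_of_subset_of_ncard_le himg hcard hfin.diff
  intro x hx hx0
  have hmem : x ∈ (· + b) '' (S0 M \ {M.sum}) := by
    rw [heq]; exact ⟨hx, by simpa using hx0⟩
  obtain ⟨y, ⟨hyA, _⟩, rfl⟩ := hmem
  simpa using hyA

lemma eq_of_two_good {M : Multiset G} {t u : G} (hM : M ≠ 0)
    (hz : MZF (M + {t} + {u})) (hgt : Good M t) (hgu : Good M u) : t = u := by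
  by_contra hne
  have hzt : MZF (M + {t}) := MZF_mono (self_le_add_right _ _) hz
  have hzu : MZF (M + {u}) :=
    MZF_mono (add_le_add_left (self_le_add_right M {t}) {u}) hz
  have hzM : MZF M := MZF_mono (self_le_add_right _ _) hzt
  have hσ : M.sum ≠ 0 := hzM M le_rfl hM
  have ht0 : t ≠ 0 := by
    have h := hzt {t} le_add_self (by simp)
    simpa using h
  have h1 : M.sum - t ∈ S0 M := back hzt hgt _ (sum_mem_S0 M) hσ
  have h2 : M.sum - t ≠ M.sum := fun h => ht0 (sub_eq_self.mp h)
  have h3 : M.sum - t + u ∈ S0 M := hgu _ h1 h2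
  have h4 : M.sum - t + u ≠ M.sum := by
    intro h
    apply hne
    have h' : u + (M.sum - t) = M.sum := by rw [add_comm]; exact h
    have hu : u = M.sum - (M.sum - t) := eq_sub_of_add_eq h'
    rw [sub_sub_cancel] at hu
    exact hu.symm
  have h5 := hgt _ h3 h4
  have hrw : M.sum - t + u + t = M.sum + u := by abel
  rw [hrw] at h5
  exact fresh hzu h5

lemma repl_step : ∀ (m : ℕ) (M : Multiset G) (t : G),
    MZF (M + Multiset.replicate (m + 1) t) → Good M t →
    (S0 (M + Multiset.replicate (m + 1) t)).ncard
      = (S0 (M + Multiset.replicate m t)).ncard + 1 := by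
  intro m
  induction m with
  | zero =>
    intro M t hz hg
    have h1 : Multiset.replicate 1 t = ({t} : Multiset G) := by simp
    rw [h1] at hz ⊢
    simpa using ncard_of_good hz hg
  | succ m ih =>
    intro M t hz hg
    have hrep : ∀ j : ℕ, M + {t} + Multiset.replicate j t
        = M + Multiset.replicate (j + 1) t := by
      intro j
      rw [add_assoc, Multiset.singleton_add, ← Multiset.replicate_succ]
    have hz' : MZF (M + {t} + Multiset.replicate (m + 1) t) := by
      rw [hrep]; exact hz
    have hzt : MZF (M + {t}) := MZF_mono (self_le_add_right _ _) hz'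
    have key := ih (M + {t}) t hz' (good_propagate hzt hg)
    rwa [hrep, hrep] at key

lemma main : ∀ (m : ℕ) (P T : Multiset G), Multiset.card T = m → 1 ≤ m → P ≠ 0 →
    MZF (P + T) → Fintype.card G ≤ 2 * (Multiset.card P + m) - 1 →
    2 * Multiset.card P ≤ (S0 P).ncard →
    ∃ b ∈ T, (S0 (P + T)).ncard = (S0 (P + T.erase b)).ncard + 1 := by
  intro m
  induction m with
  | zero => intro P T _ h1; omega
  | succ m ih =>
    intro P T hcard h1 hP hz hn hinv
    rcases Nat.eq_zero_or_pos m with rfl | hm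
    · -- base case: T = {t}
      obtain ⟨t, rfl⟩ := Multiset.card_eq_one.mp hcard
      refine ⟨t, Multiset.mem_singleton_self t, ?_⟩
      have hgrow := ncard_S0_lt hz
      have hub := ncard_S0_le (P + ({t} : Multiset G))
      have herase : ({t} : Multiset G).erase t = 0 := by simp
      rw [herase, add_zero]
      omega
    · -- inductive step: card T = m + 1 ≥ 2
      by_cases hex : ∃ t ∈ T, 2 * (Multiset.card P + 1) ≤ (S0 (P + {t})).ncard
      · obtain ⟨t, htT, hinc⟩ := hex
        have hTt : ({t} : Multiset G) + T.erase t = T := by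
          rw [Multiset.singleton_add, Multiset.cons_erase htT]
        have hassoc : P + {t} + T.erase t = P + T := by
          rw [add_assoc, hTt]
        have hcard' : Multiset.card (T.erase t) = m := by
          rw [Multiset.card_erase_of_mem htT, hcard]; rfl
        have hP' : P + ({t} : Multiset G) ≠ 0 := by
          intro h0
          have := congrArg Multiset.card h0
          simp at this
        have hz' : MZF (P + {t} + T.erase t) := by rw [hassoc]; exact hz
        have hn' : Fintype.card G ≤ 2 * (Multiset.card (P + {t}) + m) - 1 := by
          simp only [Multiset.card_add, Multiset.card_singleton]
          omega
        have hinv' : 2 * Multiset.card (P + {t}) ≤ (S0 (P + {t})).ncard := by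
          simp only [Multiset.card_add, Multiset.card_singleton]
          exact hinc
        obtain ⟨b, hb, heq⟩ := ih (P + {t}) (T.erase t) hcard' hm hP' hz' hn' hinv'
        refine ⟨b, Multiset.mem_of_mem_erase hb, ?_⟩
        have htTb : t ∈ T.erase b := by
          rcases eq_or_ne t b with rfl | hne
          · exact hb
          · exact (Multiset.mem_erase_of_ne hne).mpr htT
        have hkey : P + {t} + (T.erase t).erase b = P + T.erase b := by
          rw [add_assoc, Multiset.singleton_add, Multiset.erase_comm,
            Multiset.cons_erase htTb]
        rw [hassoc, hkey] at heq
        exact heq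
      · push_neg at hex
        -- all increments are exactly 1, so all terms are Good
        have hTne : T ≠ 0 := by
          intro h0; rw [h0] at hcard; simp at hcard
        obtain ⟨t₀, ht₀⟩ := Multiset.exists_mem_of_ne_zero hTne
        have hgood : ∀ u ∈ T, Good P u := by
          intro u huT
          have hzu : MZF (P + {u}) := by
            refine MZF_mono ?_ hz
            exact add_le_add_right (Multiset.singleton_le.mpr huT) P
          apply good_of_inc1 hzu
          have hgrow := ncard_S0_lt hzu
          have := hex u huT
          omega
        have hall : ∀ u ∈ T, u = t₀ := by
          intro u huT
          by_contra hne
          have hle : P + {u} + {t₀} ≤ P + T := by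
            have h1 : t₀ ∈ T.erase u := by
              exact (Multiset.mem_erase_of_ne (Ne.symm hne)).mpr ht₀
            have h2 : ({u} : Multiset G) + {t₀} ≤ T := by
              calc ({u} : Multiset G) + {t₀}
                  ≤ {u} + T.erase u := add_le_add_right (Multiset.singleton_le.mpr h1) _
                _ = T := by rw [Multiset.singleton_add, Multiset.cons_erase huT]
            calc P + {u} + {t₀} = P + ({u} + {t₀}) := by rw [add_assoc]
              _ ≤ P + T := add_le_add_right h2 P
          exact hne (eq_of_two_good hP (MZF_mono hle hz) (hgood u huT) (hgood t₀ ht₀))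
        have hT : T = Multiset.replicate (m + 1) t₀ :=
          Multiset.eq_replicate.mpr ⟨hcard, hall⟩
        refine ⟨t₀, ht₀, ?_⟩
        have herase : T.erase t₀ = Multiset.replicate m t₀ := by
          rw [hT, Multiset.replicate_succ, Multiset.erase_cons_head]
        rw [herase, hT]
        refine repl_step m P t₀ ?_ (hgood t₀ ht₀)
        rw [← hT]; exact hz

end Aux

section Bridge

variable {G : Type*} [AddCommGroup G]

lemma MZF_of_zeroFree {l : List G} (h : ZeroFree l) : MZF (↑l : Multiset G) := by
  intro s hs hs0
  obtain ⟨t, ht, rfl⟩ := le_coe_iff.mp hs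
  rw [Multiset.sum_coe]
  exact h t ht (by simpa using hs0)

lemma sumset_ncard_eq [Fintype G] {l : List G} (h : MZF (↑l : Multiset G)) :
    (S0 (↑l : Multiset G)).ncard = (sumset l).ncard + 1 := by
  have h0 : (0 : G) ∉ sumset l := by
    rintro ⟨t, ht, htne, hts⟩
    exact h ↑t (le_coe_iff.mpr ⟨t, ht, rfl⟩) (by simpa using htne) (by simpa using hts)
  have hS : S0 (↑l : Multiset G) = insert 0 (sumset l) := by
    ext x
    constructor
    · rintro ⟨s, hs, rfl⟩
      rcases eq_or_ne s 0 with rfl | hne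
      · simp
      · obtain ⟨t, ht, rfl⟩ := le_coe_iff.mp hs
        refine Set.mem_insert_of_mem _ ⟨t, ht, ?_, (Multiset.sum_coe t).symm⟩
        intro h0; rw [h0] at hne; simp at hne
    · rintro (rfl | ⟨t, ht, htne, rfl⟩)
      · exact zero_mem_S0 _
      · exact ⟨↑t, le_coe_iff.mpr ⟨t, ht, rfl⟩, Multiset.sum_coe t⟩
  rw [hS, Set.ncard_insert_of_notMem h0 (Set.toFinite _)]

end Bridge

theorem stmt8 (n : ℕ) (hn : 1 < n) (α : List (ZMod n)) (hlen : n < 2 * α.length)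
    (hzf : ZeroFree α) (k : ℕ) (hk1 : 1 ≤ k) (hk2 : k ≤ α.length - 2)
    (hbig : 2 * k + 1 ≤ (sumset (α.take (k + 1))).ncard) :
    ∃ β : List (ZMod n), (α.drop (k + 1)).Perm β ∧
      (sumset (α.take (k + 1) ++ β)).ncard =
        (sumset ((α.take (k + 1) ++ β).dropLast)).ncard + 1 := by
  haveI : NeZero n := ⟨by omega⟩
  classical
  have hlen2 : 2 ≤ α.length := by omega
  set P : List (ZMod n) := α.take (k + 1) with hPdef
  set D : List (ZMod n) := α.drop (k + 1) with hDdef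
  have hPD : P ++ D = α := List.take_append_drop _ _
  have hPlen : P.length = k + 1 := by rw [hPdef, List.length_take]; omega
  have hDlen : D.length = α.length - (k + 1) := List.length_drop
  have hzfm : MZF (↑α : Multiset (ZMod n)) := MZF_of_zeroFree hzf
  have hcoe : (↑P + ↑D : Multiset (ZMod n)) = ↑α := by rw [← hPD]; rfl
  have hzPD : MZF (↑P + ↑D : Multiset (ZMod n)) := by rw [hcoe]; exact hzfm
  have hzP : MZF (↑P : Multiset (ZMod n)) := MZF_mono (self_le_add_right _ _) hzPD
  have hPcard : Multiset.card (↑P : Multiset (ZMod n)) = k + 1 := by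
    rw [Multiset.coe_card, hPlen]
  have hinv : 2 * Multiset.card (↑P : Multiset (ZMod n))
      ≤ (S0 (↑P : Multiset (ZMod n))).ncard := by
    have := sumset_ncard_eq hzP
    rw [hPcard]
    omega
  obtain ⟨b, hbT, heq⟩ := main (α.length - (k + 1)) (↑P : Multiset (ZMod n)) (↑D : Multiset (ZMod n))
    (by rw [Multiset.coe_card, hDlen]) (by omega)
    (by
      intro h0
      have := congrArg Multiset.card h0
      rw [hPcard] at this
      simp at this)
    hzPD
    (by rw [hPcard, ZMod.card n]; omega)
    hinv
  set E : Multiset (ZMod n) := (↑D : Multiset (ZMod n)).erase b with hEdef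
  have hEb : E + {b} = (↑D : Multiset (ZMod n)) := by
    rw [add_comm, Multiset.singleton_add, Multiset.cons_erase hbT]
  refine ⟨E.toList ++ [b], ?_, ?_⟩
  · rw [← Multiset.coe_eq_coe]
    show (↑D : Multiset (ZMod n)) = ↑(E.toList ++ [b])
    have : (↑(E.toList ++ [b]) : Multiset (ZMod n)) = E + {b} :=
      calc (↑(E.toList ++ [b]) : Multiset (ZMod n)) = ↑E.toList + ↑[b] := rfl
        _ = E + {b} := by rw [Multiset.coe_toList, Multiset.coe_singleton]
    rw [this, hEb]
  · have hL : P ++ (E.toList ++ [b]) = (P ++ E.toList) ++ [b] :=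
      (List.append_assoc _ _ _).symm
    rw [hL, List.dropLast_concat]
    have m1 : (↑(P ++ E.toList ++ [b]) : Multiset (ZMod n)) = ↑P + ↑D := by
      show (↑P : Multiset (ZMod n)) + ↑E.toList + ↑[b] = ↑P + ↑D
      rw [Multiset.coe_toList, Multiset.coe_singleton, add_assoc, hEb]
    have m2 : (↑(P ++ E.toList) : Multiset (ZMod n)) = ↑P + E := by
      show (↑P : Multiset (ZMod n)) + ↑E.toList = ↑P + E
      rw [Multiset.coe_toList]
    have z1 : MZF (↑(P ++ E.toList ++ [b]) : Multiset (ZMod n)) := by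
      rw [m1]; exact hzPD
    have z2 : MZF (↑(P ++ E.toList) : Multiset (ZMod n)) := by
      rw [m2]
      refine MZF_mono ?_ hzPD
      exact add_le_add_right (Multiset.erase_le b _) _
    have e1 := sumset_ncard_eq z1
    have e2 := sumset_ncard_eq z2
    rw [m1] at e1
    rw [m2] at e2
    omega
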